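/- Let p : ℂ² → [0,∞) be Lebesgue measurable and Lebesgue integrable. Then p is invariant almost everywhere under SU(2) transformations (i.e. for every U ∈ SU(2) there is a Lebesgue null set N_U ⊆ ℂ² with p(U w) = p(w) for all w ∉ N_U) if and only if there exists a measurable function f : [0,∞) → [0,∞) such that p(w) = f(‖w‖) for Lebesgue-almost every w ∈ ℂ². -/

import Mathlib

open MeasureTheory Real Set

noncomputable section

/-- `SU(2)`: 2×2 complex unitary matrices with determinant 1. -/
abbrev SU2 := Matrix.specialUnitaryGroup (Fin 2) ℂ

/-- Action of `SU(2)` on `ℂ²` by matrix–vector multiplication. -/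
def su2Smul (U : SU2) (w : ℂ × ℂ) : ℂ × ℂ :=
  ((U : Matrix (Fin 2) (Fin 2) ℂ) 0 0 * w.1 + (U : Matrix (Fin 2) (Fin 2) ℂ) 0 1 * w.2,
   (U : Matrix (Fin 2) (Fin 2) ℂ) 1 0 * w.1 + (U : Matrix (Fin 2) (Fin 2) ℂ) 1 1 * w.2)

/-- The Euclidean norm `‖w‖ = √(|α|² + |β|²)` of `w = (α, β) ∈ ℂ²`. -/
def cnorm (w : ℂ × ℂ) : ℝ := Real.sqrt (‖w.1‖ ^ 2 + ‖w.2‖ ^ 2)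

/-! ### Auxiliary material -/

local notation "Mat2" => Matrix (Fin 2) (Fin 2) ℂ

lemma SU2.star_mem {A : Mat2} (hA : A ∈ Matrix.specialUnitaryGroup (Fin 2) ℂ) :
    star A ∈ Matrix.specialUnitaryGroup (Fin 2) ℂ := by
  obtain ⟨h1, h2⟩ := Matrix.mem_specialUnitaryGroup_iff.mp hA
  refine Matrix.mem_specialUnitaryGroup_iff.mpr ⟨Unitary.star_mem h1, ?_⟩
  rw [Matrix.star_eq_conjTranspose, Matrix.det_conjTranspose, h2, star_one]

instance : Group SU2 :=
  { (inferInstance : Monoid SU2) with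
    inv := fun U => ⟨star U.1, SU2.star_mem U.2⟩
    inv_mul_cancel := fun U =>
      Subtype.ext ((Matrix.mem_specialUnitaryGroup_iff.mp U.2).1.1) }

@[simp] lemma SU2.coe_inv (U : SU2) : ((U⁻¹ : SU2) : Mat2) = star (U : Mat2) := rfl

lemma SU2.star_mul_self (U : SU2) : star (U : Mat2) * (U : Mat2) = 1 :=
  (Matrix.mem_specialUnitaryGroup_iff.mp U.2).1.1

/-- the entries relations coming from unitarity -/
lemma SU2.entry_rel (U : SU2) (j k : Fin 2) :
    (starRingEnd ℂ) ((U : Mat2) 0 j) * (U : Mat2) 0 k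
      + (starRingEnd ℂ) ((U : Mat2) 1 j) * (U : Mat2) 1 k
      = if j = k then 1 else 0 := by
  have h := SU2.star_mul_self U
  have h' : (star (U : Mat2) * (U : Mat2)) j k = (1 : Mat2) j k := by rw [h]
  simpa [Matrix.mul_apply, Fin.sum_univ_two, Matrix.star_apply, Matrix.one_apply,
    Complex.star_def] using h'

lemma cnorm_su2Smul (U : SU2) (w : ℂ × ℂ) : cnorm (su2Smul U w) = cnorm w := by
  obtain ⟨w1, w2⟩ := w
  have h00 := SU2.entry_rel U 0 0
  have h11 := SU2.entry_rel U 1 1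
  have h01 := SU2.entry_rel U 0 1
  have h10 := SU2.entry_rel U 1 0
  rw [if_pos rfl] at h00
  rw [if_pos rfl] at h11
  rw [if_neg (by decide : ¬ (0 : Fin 2) = 1)] at h01
  rw [if_neg (by decide : ¬ (1 : Fin 2) = 0)] at h10
  unfold cnorm su2Smul
  congr 1
  simp only [Complex.sq_norm]
  have key : (Complex.normSq ((U : Mat2) 0 0 * w1 + (U : Mat2) 0 1 * w2) : ℂ)
      + (Complex.normSq ((U : Mat2) 1 0 * w1 + (U : Mat2) 1 1 * w2) : ℂ)
      = (Complex.normSq w1 : ℂ) + (Complex.normSq w2 : ℂ) := by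
    rw [← Complex.mul_conj, ← Complex.mul_conj, ← Complex.mul_conj, ← Complex.mul_conj]
    simp only [map_add, map_mul]
    linear_combination (w1 * (starRingEnd ℂ) w1) * h00 + (w2 * (starRingEnd ℂ) w2) * h11
      + (w2 * (starRingEnd ℂ) w1) * h01 + (w1 * (starRingEnd ℂ) w2) * h10
  exact_mod_cast key

lemma su2Smul_mul (U V : SU2) (w : ℂ × ℂ) :
    su2Smul (U * V) w = su2Smul U (su2Smul V w) := by
  obtain ⟨w1, w2⟩ := w
  have hco : ((U * V : SU2) : Mat2) = (U : Mat2) * (V : Mat2) := rfl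
  simp only [su2Smul, hco, Matrix.mul_apply, Fin.sum_univ_two, Prod.mk.injEq]
  constructor <;> ring

lemma su2Smul_one (w : ℂ × ℂ) : su2Smul 1 w = w := by
  obtain ⟨w1, w2⟩ := w
  have hco : ((1 : SU2) : Mat2) = (1 : Mat2) := rfl
  simp [su2Smul, hco, Matrix.one_apply]

/-- the action as an `ℝ`-linear map -/
def su2LinMap (U : SU2) : (ℂ × ℂ) →ₗ[ℝ] (ℂ × ℂ) where
  toFun := su2Smul U
  map_add' := by
    intro x y
    simp only [su2Smul, Prod.fst_add, Prod.snd_add, Prod.mk_add_mk, Prod.mk.injEq]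
    constructor <;> ring
  map_smul' := by
    intro c x
    simp only [su2Smul, Prod.smul_fst, Prod.smul_snd, Complex.real_smul, Prod.smul_mk,
      RingHom.id_apply, Prod.mk.injEq]
    constructor <;> ring

lemma su2LinMap_apply (U : SU2) (w : ℂ × ℂ) : su2LinMap U w = su2Smul U w := rfl

/-- the action as an `ℝ`-linear equivalence -/
def su2LinEquiv (U : SU2) : (ℂ × ℂ) ≃ₗ[ℝ] (ℂ × ℂ) :=
  LinearEquiv.ofLinear (su2LinMap U) (su2LinMap U⁻¹)
    (by
      apply LinearMap.ext; intro w
      simp only [LinearMap.comp_apply, su2LinMap_apply, LinearMap.id_apply]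
      rw [← su2Smul_mul, mul_inv_cancel, su2Smul_one])
    (by
      apply LinearMap.ext; intro w
      simp only [LinearMap.comp_apply, su2LinMap_apply, LinearMap.id_apply]
      rw [← su2Smul_mul, inv_mul_cancel, su2Smul_one])

lemma su2LinMap_det_ne_zero (U : SU2) : LinearMap.det (su2LinMap U) ≠ 0 :=
  (LinearEquiv.isUnit_det' (su2LinEquiv U)).ne_zero

instance : MeasureTheory.Measure.IsAddHaarMeasure (volume : Measure (ℂ × ℂ)) :=
  Measure.prod.instIsAddHaarMeasure _ _

lemma su2_null_preimage (U : SU2) {N : Set (ℂ × ℂ)} (hN : volume N = 0) :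
    volume (su2Smul U ⁻¹' N) = 0 := by
  have : su2Smul U ⁻¹' N = su2LinMap U ⁻¹' N := rfl
  rw [this, Measure.addHaar_preimage_linearMap volume (su2LinMap_det_ne_zero U), hN, mul_zero]

/-! ### Topology and measure on `SU2` -/

instance : MeasurableSpace Mat2 := inferInstanceAs (MeasurableSpace (Fin 2 → Fin 2 → ℂ))
instance : BorelSpace Mat2 := inferInstanceAs (BorelSpace (Fin 2 → Fin 2 → ℂ))
instance : SecondCountableTopology Mat2 :=
  inferInstanceAs (SecondCountableTopology (Fin 2 → Fin 2 → ℂ))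
instance : BorelSpace SU2 :=
  Subtype.borelSpace {A : Mat2 | A ∈ Matrix.specialUnitaryGroup (Fin 2) ℂ}

instance : IsTopologicalGroup SU2 where
  continuous_mul := continuous_mul
  continuous_inv := by
    apply Continuous.subtype_mk (f := fun U : SU2 => star (U : Mat2))
    exact continuous_star.comp continuous_subtype_val

instance : CompactSpace SU2 := by
  suffices hcc : IsCompact {A : Mat2 | A ∈ Matrix.specialUnitaryGroup (Fin 2) ℂ} from
    isCompact_iff_compactSpace.mp hcc
  have hK : IsCompact {A : Mat2 | ∀ i j, A i j ∈ Metric.closedBall (0 : ℂ) 1} := by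
    have hEq : {A : Mat2 | ∀ i j, A i j ∈ Metric.closedBall (0 : ℂ) 1} =
        (univ.pi fun _ : Fin 2 => univ.pi fun _ : Fin 2 => Metric.closedBall (0 : ℂ) 1) := by
      ext A
      constructor
      · intro hA
        refine Set.mem_univ_pi.mpr ?_
        intro i
        rw [Set.mem_univ_pi]
        exact hA i
      · intro hA i j
        exact Set.mem_univ_pi.mp (Set.mem_univ_pi.mp hA i) j
    rw [hEq]
    exact isCompact_univ_pi fun _ => isCompact_univ_pi fun _ => isCompact_closedBall 0 1
  apply IsCompact.of_isClosed_subset hK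
  · have h1 : IsClosed {A : Mat2 | star A * A = 1} :=
      isClosed_singleton.preimage
        ((continuous_star.matrix_mul continuous_id))
    have h2 : IsClosed {A : Mat2 | A.det = 1} :=
      isClosed_singleton.preimage (continuous_id.matrix_det)
    have : {A : Mat2 | A ∈ Matrix.specialUnitaryGroup (Fin 2) ℂ}
        = {A : Mat2 | star A * A = 1} ∩ {A : Mat2 | A.det = 1} := by
      ext A
      simp only [mem_setOf_eq, mem_inter_iff, Matrix.mem_specialUnitaryGroup_iff,
        Matrix.mem_unitaryGroup_iff']
    rw [this]
    exact h1.inter h2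
  · intro A hA
    obtain ⟨h1, _⟩ := Matrix.mem_specialUnitaryGroup_iff.mp hA
    have h1' : star A * A = 1 := Matrix.mem_unitaryGroup_iff'.mp h1
    intro i j
    rw [mem_closedBall_zero_iff]
    have he : (star A * A) j j = (1 : Mat2) j j := by rw [h1']
    simp only [Matrix.mul_apply, Fin.sum_univ_two, Matrix.star_apply, Matrix.one_apply_eq,
      Complex.star_def] at he
    have he' : Complex.normSq (A 0 j) + Complex.normSq (A 1 j) = 1 := by
      have h2 := congrArg Complex.re he
      simp only [Complex.add_re, Complex.mul_re, Complex.conj_re, Complex.conj_im,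
        Complex.one_re] at h2
      simp only [Complex.normSq_apply]
      ring_nf at h2 ⊢
      linarith [h2]
    have hle : Complex.normSq (A i j) ≤ 1 := by
      have hA0 : Complex.normSq (A 0 j) ≤ 1 := by
        nlinarith [Complex.normSq_nonneg (A 1 j)]
      have hA1 : Complex.normSq (A 1 j) ≤ 1 := by
        nlinarith [Complex.normSq_nonneg (A 0 j)]
      fin_cases i
      · exact hA0
      · exact hA1
    have h3 : ‖A i j‖ ^ 2 ≤ 1 := by
      rw [Complex.sq_norm]; exact hle
    nlinarith [norm_nonneg (A i j)]

instance : Nonempty SU2 := ⟨1⟩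

/-! ### Transitivity on spheres -/

lemma cnorm_nonneg (w : ℂ × ℂ) : 0 ≤ cnorm w := Real.sqrt_nonneg _

lemma cnorm_pos {w : ℂ × ℂ} (hw : w ≠ 0) : 0 < cnorm w := by
  rcases (cnorm_nonneg w).lt_or_eq with h | h
  · exact h
  · exfalso
    apply hw
    have h2 : ‖w.1‖ ^ 2 + ‖w.2‖ ^ 2 = 0 := by
      have hnn : 0 ≤ ‖w.1‖ ^ 2 + ‖w.2‖ ^ 2 := by positivity
      have := Real.sqrt_eq_zero hnn |>.mp h.symm
      exact this
    have ha : ‖w.1‖ = 0 ∧ ‖w.2‖ = 0 := by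
      constructor <;> nlinarith [norm_nonneg w.1, norm_nonneg w.2]
    have : w.1 = 0 := by simpa using ha.1
    have : w.2 = 0 := by simpa using ha.2
    exact Prod.ext (by simpa using ha.1) (by simpa using ha.2)

lemma exists_su2_moves (w : ℂ × ℂ) {l : ℝ} (hl : 0 < l) (hw : cnorm w = l) :
    ∃ U : SU2, su2Smul U ((l : ℂ), 0) = w := by
  obtain ⟨w1, w2⟩ := w
  have hlC : (l : ℂ) ≠ 0 := by exact_mod_cast hl.ne'
  have hnsq : Complex.normSq w1 + Complex.normSq w2 = l ^ 2 := by
    have : Real.sqrt (‖w1‖ ^ 2 + ‖w2‖ ^ 2) = l := hw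
    have h' := congrArg (· ^ 2) this
    change Real.sqrt (‖w1‖ ^ 2 + ‖w2‖ ^ 2) ^ 2 = l ^ 2 at h'
    rw [Real.sq_sqrt (by positivity)] at h'
    simpa [Complex.sq_norm] using h'
  have hc : w1 * (starRingEnd ℂ) w1 + w2 * (starRingEnd ℂ) w2 = (l : ℂ) ^ 2 := by
    rw [Complex.mul_conj, Complex.mul_conj]
    exact_mod_cast congrArg (fun x : ℝ => (x : ℂ)) hnsq
  set M : Mat2 := !![w1 / l, -((starRingEnd ℂ) w2) / l; w2 / l, ((starRingEnd ℂ) w1) / l]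
    with hM
  have hMmem : M ∈ Matrix.specialUnitaryGroup (Fin 2) ℂ := by
    refine Matrix.mem_specialUnitaryGroup_iff.mpr ⟨Matrix.mem_unitaryGroup_iff'.mpr ?_, ?_⟩
    · ext i j
      fin_cases i <;> fin_cases j
      all_goals
        simp [Matrix.mul_apply, Fin.sum_univ_two, Matrix.star_apply, Complex.star_def, hM,
          Matrix.one_apply, map_div₀]
      all_goals try field_simp [hlC]
      all_goals
        first
          | linear_combination hc
          | linear_combination -hc
          | ring
    · rw [hM, Matrix.det_fin_two_of]
      field_simp
      linear_combination hc
  refine ⟨⟨M, hMmem⟩, ?_⟩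
  have hcoe : ((⟨M, hMmem⟩ : SU2) : Mat2) = M := rfl
  simp only [su2Smul, hcoe, hM, Matrix.cons_val', Matrix.cons_val_zero, Matrix.cons_val_one,
    Matrix.head_cons, Matrix.empty_val', Matrix.cons_val_fin_one, Matrix.head_fin_const,
    mul_zero, add_zero, Prod.mk.injEq]
  constructor <;> simp [Matrix.of_apply] <;> field_simp

/-! ### Continuity of the action -/

lemma continuous_su2Smul : Continuous (fun q : SU2 × (ℂ × ℂ) => su2Smul q.1 q.2) := by
  have hc : ∀ i j : Fin 2, Continuous (fun q : SU2 × (ℂ × ℂ) => (q.1 : Mat2) i j) := by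
    intro i j
    exact (continuous_subtype_val.comp continuous_fst).matrix_elem i j
  have hw1 : Continuous (fun q : SU2 × (ℂ × ℂ) => q.2.1) := continuous_fst.comp continuous_snd
  have hw2 : Continuous (fun q : SU2 × (ℂ × ℂ) => q.2.2) := continuous_snd.comp continuous_snd
  unfold su2Smul
  exact (((hc 0 0).mul hw1).add ((hc 0 1).mul hw2)).prodMk
    (((hc 1 0).mul hw1).add ((hc 1 1).mul hw2))

/-! ### Main theorem -/

/-- A measurable, integrable `p : ℂ² → [0,∞)` is a.e. invariant under `SU(2)` transformations
iff there is a measurable `f : [0,∞) → [0,∞)` with `p w = f ‖w‖` for a.e. `w ∈ ℂ²`. -/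
theorem su2_ae_invariant_iff_ae_radial (p : ℂ × ℂ → ℝ) (hp0 : ∀ w, 0 ≤ p w)
    (hpm : Measurable p) (hpi : Integrable p (volume : Measure (ℂ × ℂ))) :
    (∀ U : SU2, ∀ᵐ w : ℂ × ℂ ∂volume, p (su2Smul U w) = p w) ↔
      ∃ f : ℝ → ℝ, Measurable f ∧ (∀ l, 0 ≤ l → 0 ≤ f l) ∧
        ∀ᵐ w : ℂ × ℂ ∂volume, p w = f (cnorm w) := by
  constructor
  · intro hinv
    set μ : Measure SU2 := Measure.haarMeasure (⊤ : TopologicalSpace.PositiveCompacts SU2)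
      with hμdef
    haveI : IsProbabilityMeasure μ :=
      ⟨by simpa using Measure.haarMeasure_self (K₀ := (⊤ : TopologicalSpace.PositiveCompacts SU2))⟩
    -- joint measurability
    have hact : Measurable (fun q : SU2 × (ℂ × ℂ) => p (su2Smul q.1⁻¹ q.2)) := by
      apply hpm.comp
      apply Continuous.measurable
      exact continuous_su2Smul.comp
        ((Continuous.comp (continuous_inv (G := SU2)) continuous_fst).prodMk continuous_snd)
    set F : SU2 × (ℂ × ℂ) → ENNReal :=
      fun q => ENNReal.ofReal |p (su2Smul q.1⁻¹ q.2) - p q.2| with hFdef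
    have hF : Measurable F :=
      ((hact.sub (hpm.comp measurable_snd)).abs).ennreal_ofReal
    have hinner0 : ∀ U : SU2, ∫⁻ w, F (U, w) ∂(volume : Measure (ℂ × ℂ)) = 0 := by
      intro U
      have h := hinv U⁻¹
      have hz : (fun w => F (U, w)) =ᵐ[volume] (fun _ => (0 : ENNReal)) := by
        filter_upwards [h] with w hw
        simp [hFdef, hw, sub_self]
      rw [lintegral_congr_ae hz, lintegral_zero]
    have hswap : ∫⁻ w, (∫⁻ U, F (U, w) ∂μ) ∂(volume : Measure (ℂ × ℂ)) = 0 := by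
      rw [← lintegral_lintegral_swap hF.aemeasurable]
      simp [hinner0]
    have hmeasInt : Measurable (fun w : ℂ × ℂ => ∫⁻ U, F (U, w) ∂μ) :=
      hF.lintegral_prod_left'
    have hae : ∀ᵐ w : ℂ × ℂ ∂volume, ∫⁻ U, F (U, w) ∂μ = 0 :=
      (lintegral_eq_zero_iff hmeasInt).mp hswap
    have hae2 : ∀ᵐ w : ℂ × ℂ ∂volume, ∀ᵐ U ∂μ, p (su2Smul U⁻¹ w) = p w := by
      filter_upwards [hae] with w hw
      have hm : Measurable fun U : SU2 => F (U, w) :=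
        hF.comp (measurable_id.prodMk measurable_const)
      have h0 := (lintegral_eq_zero_iff hm).mp hw
      filter_upwards [h0] with U hU
      have : |p (su2Smul U⁻¹ w) - p w| ≤ 0 := by
        simpa [hFdef, ENNReal.ofReal_eq_zero] using hU
      have : |p (su2Smul U⁻¹ w) - p w| = 0 := le_antisymm this (abs_nonneg _)
      have := abs_eq_zero.mp this
      linarith [sub_eq_zero.mp this]
    set g : (ℂ × ℂ) → ENNReal :=
      fun w => ∫⁻ U, ENNReal.ofReal (p (su2Smul U⁻¹ w)) ∂μ with hgdef
    have hg_eq : ∀ᵐ w : ℂ × ℂ ∂volume, g w = ENNReal.ofReal (p w) := by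
      filter_upwards [hae2] with w hw
      have : (fun U : SU2 => ENNReal.ofReal (p (su2Smul U⁻¹ w)))
          =ᵐ[μ] (fun _ => ENNReal.ofReal (p w)) := by
        filter_upwards [hw] with U hU
        rw [hU]
      rw [hgdef]
      simp only
      rw [lintegral_congr_ae this, lintegral_const, measure_univ, mul_one]
    have hg_inv : ∀ (V : SU2) (w : ℂ × ℂ), g (su2Smul V w) = g w := by
      intro V w
      have hstep : ∀ U : SU2, su2Smul U⁻¹ (su2Smul V w) = su2Smul (V⁻¹ * U)⁻¹ w := by
        intro U
        rw [← su2Smul_mul]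
        congr 1
        group
      calc g (su2Smul V w)
          = ∫⁻ U, ENNReal.ofReal (p (su2Smul (V⁻¹ * U)⁻¹ w)) ∂μ := by
            rw [hgdef]; simp only; exact lintegral_congr fun U => by rw [hstep U]
        _ = ∫⁻ U, ENNReal.ofReal (p (su2Smul U⁻¹ w)) ∂μ :=
            lintegral_mul_left_eq_self (fun X => ENNReal.ofReal (p (su2Smul X⁻¹ w))) V⁻¹
        _ = g w := rfl
    have hg_meas : Measurable g := by
      rw [hgdef]
      exact Measurable.lintegral_prod_left' (hact.ennreal_ofReal)
    set h : ℝ → ENNReal := fun l => g (((l : ℝ) : ℂ), 0) with hhdef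
    have hradial : ∀ w : ℂ × ℂ, g w = h (cnorm w) := by
      intro w
      rcases eq_or_ne w 0 with rfl | hw
      · have hc0 : cnorm 0 = 0 := by simp [cnorm]
        rw [hc0, hhdef]
        norm_num
        rfl
      · have hl : 0 < cnorm w := cnorm_pos hw
        obtain ⟨U, hU⟩ := exists_su2_moves w hl rfl
        calc g w = g (su2Smul U (((cnorm w : ℝ) : ℂ), 0)) := by rw [hU]
          _ = g (((cnorm w : ℝ) : ℂ), 0) := hg_inv U _
          _ = h (cnorm w) := rfl
    refine ⟨fun l => (h l).toReal, ?_, fun l _ => ENNReal.toReal_nonneg, ?_⟩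
    · apply Measurable.ennreal_toReal
      exact hg_meas.comp (Complex.measurable_ofReal.prodMk measurable_const)
    · filter_upwards [hg_eq] with w hw
      rw [← hradial w, hw, ENNReal.toReal_ofReal (hp0 w)]
  · rintro ⟨f, hfm, hf0, hfae⟩ U
    have hN : volume {w : ℂ × ℂ | ¬ p w = f (cnorm w)} = 0 := ae_iff.mp hfae
    have hN2 : volume (su2Smul U ⁻¹' {w : ℂ × ℂ | ¬ p w = f (cnorm w)}) = 0 :=
      su2_null_preimage U hN
    have h1 : ∀ᵐ w : ℂ × ℂ ∂volume, p (su2Smul U w) = f (cnorm (su2Smul U w)) := by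
      rw [ae_iff]
      exact hN2
    filter_upwards [h1, hfae] with w h1w h2w
    rw [h1w, cnorm_su2Smul, ← h2w]
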